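/- arXiv:1801.08249 — 3 statements merged into one kernel-verified Lean document; each statement's English description precedes it below -/
import Mathlib

section
/- Let T be a tournament with minimum out-degree at least k, and let T' be a vertex-minimal subtournament of T with minimum out-degree at least k. Then every vertex of T' whose out-degree in T' is strictly greater than k has an in-neighbour in T' whose out-degree in T' is exactly k. -/
/-- A tournament: an irreflexive relation where every pair of distinct
vertices is joined by exactly one directed edge. -/
def IsTournament {V : Type} (r : V → V → Prop) : Prop :=
  (∀ x, ¬ r x x) ∧ ∀ x y : V, x ≠ y → (r x y ↔ ¬ r y x)

/-- Out-degree of `x` in the whole tournament. -/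
def outDeg {V : Type} [Fintype V] (r : V → V → Prop) [DecidableRel r] (x : V) : ℕ :=
  (Finset.univ.filter fun y => r x y).card

/-- Out-degree of `x` inside the subtournament induced on `S`. -/
def outDegOn {V : Type} [DecidableEq V] (r : V → V → Prop) [DecidableRel r]
    (S : Finset V) (x : V) : ℕ :=
  (S.filter fun y => r x y).card

/-- In a vertex-minimal subtournament `S` with minimum out-degree at least `k`,
every vertex of out-degree strictly greater than `k` has an in-neighbour of
out-degree exactly `k`. -/
theorem in_neighbour_of_outdeg_k {V : Type} [Fintype V] [DecidableEq V]
    (r : V → V → Prop) [DecidableRel r] (hT : IsTournament r)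
    (k : ℕ) (hk : 0 < k) (hdeg : ∀ v : V, k ≤ outDeg r v)
    (S : Finset V) (hSne : S.Nonempty)
    (hSdeg : ∀ v ∈ S, k ≤ outDegOn r S v)
    (hSmin : ∀ S' : Finset V, S' ⊂ S → S'.Nonempty → ∃ v ∈ S', outDegOn r S' v < k) :
    ∀ v ∈ S, k < outDegOn r S v → ∃ u ∈ S, r u v ∧ outDegOn r S u = k := by
  intro v hv hvk
  set S' := S.erase v with hS'
  have hsub : S' ⊂ S := Finset.erase_ssubset hv
  have hne : S'.Nonempty := by
    rcases Finset.eq_empty_or_nonempty S' with h | h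
    · exfalso
      have hSv : S = {v} := by
        rcases (Finset.erase_eq_empty_iff S v).mp h with h1 | h1
        · exact absurd h1 hSne.ne_empty
        · exact h1
      have h0 : outDegOn r S v = 0 := by
        simp [outDegOn, hSv, Finset.filter_singleton, hT.1 v]
      omega
    · exact h
  obtain ⟨u, huS', hult⟩ := hSmin S' hsub hne
  have huS : u ∈ S := Finset.mem_of_mem_erase huS'
  have hrel : outDegOn r S u = outDegOn r S' u + (if r u v then 1 else 0) := by
    have hS : S = insert v S' := (Finset.insert_erase hv).symm
    rw [hS]
    unfold outDegOn
    rw [Finset.filter_insert]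
    split
    · rw [Finset.card_insert_of_notMem (by simp [hS'])]
    · rfl
  have hk' := hSdeg u huS
  by_cases hruv : r u v
  · refine ⟨u, huS, hruv, ?_⟩
    simp only [hruv, if_true] at hrel
    omega
  · exfalso; simp only [hruv, if_false] at hrel; omega
end

section
/- Any digraph containing a subdivision of the complete directed graph K⃗₃ contains a directed cycle of even length. -/
/-- A directed path from `a` to `b`. -/
def IsDipathFrom {V : Type} (r : V → V → Prop) (a b : V) (p : List V) : Prop :=
  p.Chain' r ∧ p.Nodup ∧ p.head? = some a ∧ p.getLast? = some b

/-- The interior (internal vertices) of a path given as a list. -/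
def pathInterior {V : Type} (p : List V) : List V := p.tail.dropLast

/-- `r` contains a subdivision of the complete directed graph on `k` vertices. -/
def ContainsCompleteSubdivision {V : Type} (r : V → V → Prop) (k : ℕ) : Prop :=
  ∃ (f : Fin k → V) (P : Fin k → Fin k → List V),
    Function.Injective f ∧
    (∀ i j : Fin k, i ≠ j →
      IsDipathFrom r (f i) (f j) (P i j) ∧ 2 ≤ (P i j).length ∧
      (∀ x ∈ pathInterior (P i j), ∀ l : Fin k, x ≠ f l)) ∧
    (∀ i j i' j' : Fin k, i ≠ j → i' ≠ j' → (i, j) ≠ (i', j') →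
      ∀ x ∈ pathInterior (P i j), x ∉ pathInterior (P i' j'))

/-- `r` has a directed cycle of even length: a list of distinct vertices,
consecutively joined by edges, of even length at least 2, whose last vertex is
joined back to its first vertex. -/
def HasEvenDicycle {V : Type} (r : V → V → Prop) : Prop :=
  ∃ c : List V, c.Chain' r ∧ c.Nodup ∧ 2 ≤ c.length ∧ c.length % 2 = 0 ∧
    ∃ a b : V, c.head? = some a ∧ c.getLast? = some b ∧ r b a

lemma path_decomp {V : Type} {r : V → V → Prop} {a b : V} {p : List V}
    (hp : IsDipathFrom r a b p) (h2 : 2 ≤ p.length) :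
    p = a :: (pathInterior p ++ [b]) := by
  obtain ⟨hc, hn, hh, hl⟩ := hp
  match p, h2 with
  | x :: y :: s, _ =>
    simp only [List.head?_cons, Option.some.injEq] at hh
    subst hh
    have hne : (y :: s) ≠ [] := by simp
    have hl' : (y :: s).getLast? = some b := by
      rwa [List.getLast?_cons_cons] at hl
    have hb : (y :: s).getLast hne = b := by
      rw [List.getLast?_eq_getLast hne] at hl'
      exact Option.some_injective _ hl'
    have := List.dropLast_append_getLast hne
    rw [hb] at this
    simpa [pathInterior] using congrArg (x :: ·) this.symm

lemma seg_facts {V : Type} {r : V → V → Prop} {a b : V} {p : List V}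
    (hp : IsDipathFrom r a b p) (h2 : 2 ≤ p.length) :
    List.Chain' r (a :: pathInterior p) ∧ (a :: pathInterior p).Nodup ∧
    (∀ x ∈ (a :: pathInterior p).getLast?, r x b) ∧
    (a :: pathInterior p).length = p.length - 1 := by
  have hd := path_decomp hp h2
  obtain ⟨hc, hn, -, -⟩ := hp
  rw [hd] at hc hn
  rw [show a :: (pathInterior p ++ [b]) = (a :: pathInterior p) ++ [b] by simp] at hc hn
  unfold List.Chain' at hc; rw [List.isChain_append] at hc
  refine ⟨hc.1, hn.sublist (List.sublist_append_left _ _), ?_, ?_⟩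
  · intro x hx
    exact hc.2.2 x hx b rfl
  · have := congrArg List.length hd
    simp at this ⊢
    omega

lemma glue2 {V : Type} {r : V → V → Prop} {a b : V} {p q : List V}
    (hp : IsDipathFrom r a b p) (hp2 : 2 ≤ p.length)
    (hq : IsDipathFrom r b a q) (hq2 : 2 ≤ q.length)
    (hab : a ≠ b)
    (hpI : ∀ x ∈ pathInterior p, x ≠ a ∧ x ≠ b)
    (hqI : ∀ x ∈ pathInterior q, x ≠ a ∧ x ≠ b)
    (hdisj : ∀ x ∈ pathInterior p, x ∉ pathInterior q)
    (heven : (p.length + q.length) % 2 = 0) : HasEvenDicycle r := by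
  obtain ⟨hc1, hn1, hl1, hlen1⟩ := seg_facts hp hp2
  obtain ⟨hc2, hn2, hl2, hlen2⟩ := seg_facts hq hq2
  refine ⟨(a :: pathInterior p) ++ (b :: pathInterior q), ?_, ?_, ?_, ?_, ?_⟩
  · unfold List.Chain'; rw [List.isChain_append]
    refine ⟨hc1, hc2, fun x hx y hy => ?_⟩
    have : y = b := (by simpa using hy : b = y).symm
    subst this; exact hl1 x hx
  · rw [List.nodup_append]
    refine ⟨hn1, hn2, ?_⟩
    intro x hx y hx' hxy; subst hxy
    simp only [List.mem_cons] at hx hx'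
    rcases hx with rfl | hx
    · rcases hx' with h | h
      · exact hab h
      · exact (hqI x h).1 rfl
    · rcases hx' with rfl | h
      · exact (hpI x hx).2 rfl
      · exact hdisj x hx h
  · simp; omega
  · simp only [List.length_cons] at hlen1 hlen2
    simp only [List.length_append, List.length_cons]
    omega
  · obtain ⟨z, hz⟩ := Option.isSome_iff_exists.mp
      (List.getLast?_isSome.mpr (by simp : (b :: pathInterior q) ≠ []))
    refine ⟨a, z, by simp, ?_, hl2 z hz⟩
    rw [List.getLast?_append_of_ne_nil _ (by simp)]
    exact hz

lemma glue3 {V : Type} {r : V → V → Prop} {a b c : V} {p q s : List V}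
    (hp : IsDipathFrom r a b p) (hp2 : 2 ≤ p.length)
    (hq : IsDipathFrom r b c q) (hq2 : 2 ≤ q.length)
    (hs : IsDipathFrom r c a s) (hs2 : 2 ≤ s.length)
    (hab : a ≠ b) (hbc : b ≠ c) (hac : a ≠ c)
    (hpI : ∀ x ∈ pathInterior p, x ≠ a ∧ x ≠ b ∧ x ≠ c)
    (hqI : ∀ x ∈ pathInterior q, x ≠ a ∧ x ≠ b ∧ x ≠ c)
    (hsI : ∀ x ∈ pathInterior s, x ≠ a ∧ x ≠ b ∧ x ≠ c)
    (hpq : ∀ x ∈ pathInterior p, x ∉ pathInterior q)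
    (hps : ∀ x ∈ pathInterior p, x ∉ pathInterior s)
    (hqs : ∀ x ∈ pathInterior q, x ∉ pathInterior s)
    (hodd : (p.length + q.length + s.length) % 2 = 1) : HasEvenDicycle r := by
  obtain ⟨hc1, hn1, hl1, hlen1⟩ := seg_facts hp hp2
  obtain ⟨hc2, hn2, hl2, hlen2⟩ := seg_facts hq hq2
  obtain ⟨hc3, hn3, hl3, hlen3⟩ := seg_facts hs hs2
  refine ⟨(a :: pathInterior p) ++ ((b :: pathInterior q) ++ (c :: pathInterior s)),
    ?_, ?_, ?_, ?_, ?_⟩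
  · unfold List.Chain'; rw [List.isChain_append, List.isChain_append]
    refine ⟨hc1, ⟨hc2, hc3, fun x hx y hy => ?_⟩, fun x hx y hy => ?_⟩
    · have : y = c := (by simpa using hy : c = y).symm
      subst this; exact hl2 x hx
    · have : y = b := (by simpa using hy : b = y).symm
      subst this; exact hl1 x hx
  · rw [List.nodup_append, List.nodup_append]
    refine ⟨hn1, ⟨hn2, hn3, ?_⟩, ?_⟩
    · intro x hx y hx' hxy; subst hxy
      simp only [List.mem_cons] at hx hx'
      rcases hx with rfl | hx
      · rcases hx' with rfl | h
        · exact hbc rfl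
        · exact (hsI x h).2.1 rfl
      · rcases hx' with rfl | h
        · exact (hqI x hx).2.2 rfl
        · exact hqs x hx h
    · intro x hx y hx' hxy; subst hxy
      simp only [List.mem_cons, List.mem_append] at hx hx'
      rcases hx with rfl | hx
      · rcases hx' with (rfl | h) | (rfl | h)
        · exact hab rfl
        · exact (hqI x h).1 rfl
        · exact hac rfl
        · exact (hsI x h).1 rfl
      · rcases hx' with (rfl | h) | (rfl | h)
        · exact (hpI x hx).2.1 rfl
        · exact hpq x hx h
        · exact (hpI x hx).2.2 rfl
        · exact hps x hx h
  · simp; omega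
  · simp only [List.length_cons] at hlen1 hlen2 hlen3
    simp only [List.length_append, List.length_cons]
    omega
  · obtain ⟨z, hz⟩ := Option.isSome_iff_exists.mp
      (List.getLast?_isSome.mpr (by simp : (c :: pathInterior s) ≠ []))
    refine ⟨a, z, by simp, ?_, hl3 z hz⟩
    rw [List.getLast?_append_of_ne_nil _ (by simp), List.getLast?_append_of_ne_nil _ (by simp)]
    exact hz

/-- Any digraph containing a subdivision of `K⃗₃` contains a directed cycle of
even length. -/
theorem even_cycle_of_K3_subdivision {V : Type} (r : V → V → Prop)
    (h : ContainsCompleteSubdivision r 3) : HasEvenDicycle r := by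
  obtain ⟨f, P, hinj, hP, hD⟩ := h
  have hne : ∀ i j : Fin 3, i ≠ j → f i ≠ f j := fun i j hij hf => hij (hinj hf)
  have g2 : ∀ i j : Fin 3, i ≠ j → ((P i j).length + (P j i).length) % 2 = 0 →
      HasEvenDicycle r := by
    intro i j hij hpar
    obtain ⟨hp, hpl, hpi⟩ := hP i j hij
    obtain ⟨hq, hql, hqi⟩ := hP j i hij.symm
    exact glue2 hp hpl hq hql (hne i j hij)
      (fun x hx => ⟨hpi x hx i, hpi x hx j⟩)
      (fun x hx => ⟨hqi x hx i, hqi x hx j⟩)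
      (hD i j j i hij hij.symm (fun he => hij (congrArg Prod.fst he)))
      hpar
  have g3 : ∀ i j k : Fin 3, i ≠ j → j ≠ k → i ≠ k →
      ((P i j).length + (P j k).length + (P k i).length) % 2 = 1 →
      HasEvenDicycle r := by
    intro i j k hij hjk hik hpar
    obtain ⟨hp, hpl, hpi⟩ := hP i j hij
    obtain ⟨hq, hql, hqi⟩ := hP j k hjk
    obtain ⟨hs, hsl, hsi⟩ := hP k i hik.symm
    exact glue3 hp hpl hq hql hs hsl (hne i j hij) (hne j k hjk) (hne i k hik)
      (fun x hx => ⟨hpi x hx i, hpi x hx j, hpi x hx k⟩)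
      (fun x hx => ⟨hqi x hx i, hqi x hx j, hqi x hx k⟩)
      (fun x hx => ⟨hsi x hx i, hsi x hx j, hsi x hx k⟩)
      (hD i j j k hij hjk (fun he => hij (congrArg Prod.fst he)))
      (hD i j k i hij hik.symm (fun he => hik (congrArg Prod.fst he)))
      (hD j k k i hjk hik.symm (fun he => hjk (congrArg Prod.fst he)))
      hpar
  have key : ((P 0 1).length + (P 1 0).length) % 2 = 0 ∨
      ((P 0 2).length + (P 2 0).length) % 2 = 0 ∨
      ((P 1 2).length + (P 2 1).length) % 2 = 0 ∨
      ((P 0 1).length + (P 1 2).length + (P 2 0).length) % 2 = 1 ∨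
      ((P 0 2).length + (P 2 1).length + (P 1 0).length) % 2 = 1 := by omega
  rcases key with hk|hk|hk|hk|hk
  · exact g2 0 1 (by decide) hk
  · exact g2 0 2 (by decide) hk
  · exact g2 1 2 (by decide) hk
  · exact g3 0 1 2 (by decide) (by decide) (by decide) hk
  · exact g3 0 2 1 (by decide) (by decide) (by decide) hk
end

section
/- Let k ≥ 2 and let T be the tournament obtained as follows: V(T) = A ∪ B ∪ C with A, B, C pairwise disjoint, |C| = 2k − 2, |A|, |B| ≥ 2k, all edges directed from A to B, from B to C, and from C to A, and the edges inside each of A, B, C oriented arbitrarily. Then T is not k-linked. -/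
/-- `r` is `k`-linked. -/
def KLinked {V : Type} (r : V → V → Prop) (k : ℕ) : Prop :=
  ∀ x y : Fin k → V, Function.Injective x → Function.Injective y →
    (∀ i j, x i ≠ y j) →
    ∃ P : Fin k → List V,
      (∀ i, IsDipathFrom r (x i) (y i) (P i)) ∧
      (∀ i j, i ≠ j → ∀ v ∈ P i, v ∉ P j)

/-- A chain starting in `B` and ending in `A` must hit `C`. -/
lemma must_hit_C {V : Type} (r : V → V → Prop) (hT : IsTournament r)
    (A B C : Finset V) (hAB : Disjoint A B)
    (hcov : ∀ v : V, v ∈ A ∨ v ∈ B ∨ v ∈ C)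
    (hABedges : ∀ a ∈ A, ∀ b ∈ B, r a b) :
    ∀ p : List V, p.Chain' r → ∀ b, p.head? = some b → b ∈ B →
      ∀ l, p.getLast? = some l → l ∈ A → ∃ c ∈ C, c ∈ p := by
  intro p
  induction p with
  | nil => intro _ b hb; simp at hb
  | cons x q ih =>
    intro hch b hb hbB l hl hlA
    simp only [List.head?_cons, Option.some.injEq] at hb
    subst hb
    match q, hch with
    | [], _ =>
      simp only [List.getLast?_singleton, Option.some.injEq] at hl
      subst hl
      exact absurd hlA (Finset.disjoint_right.mp hAB hbB)
    | x' :: q', hch =>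
      by_cases hC : x' ∈ C
      · exact ⟨x', hC, by simp⟩
      have hrxx' : r x x' := (List.isChain_cons_cons.mp hch).1
      have hx'B : x' ∈ B := by
        rcases hcov x' with hA | hB | hC'
        · -- x' ∈ A : impossible, since edges go A → B
          have hne : x ≠ x' := by
            intro h; subst h; exact (Finset.disjoint_left.mp hAB hA) hbB
          have := (hT.2 x x' hne).mp hrxx'
          exact absurd (hABedges x' hA x hbB) this
        · exact hB
        · exact absurd hC' hC
      have hl' : (x' :: q').getLast? = some l := by
        rwa [List.getLast?_cons_cons] at hl
      obtain ⟨c, hcC, hcp⟩ := ih (List.isChain_cons_cons.mp hch).2 x' rfl hx'B l hl' hlA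
      exact ⟨c, hcC, List.mem_cons_of_mem _ hcp⟩

lemma head_mem_of_head? {V : Type} {p : List V} {a : V} (h : p.head? = some a) : a ∈ p := by
  cases p with
  | nil => simp at h
  | cons x q => simp only [List.head?_cons, Option.some.injEq] at h; subst h; simp

lemma last_mem_of_getLast? {V : Type} {p : List V} {a : V} (h : p.getLast? = some a) : a ∈ p := by
  obtain ⟨hne, rfl⟩ := List.mem_getLast?_eq_getLast h
  exact List.getLast_mem hne

/-- The blow-up of a directed triangle with parts `A → B → C → A`,
`|C| = 2k - 2` and `|A|, |B| ≥ 2k`, is not `k`-linked. -/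
theorem triangle_blowup_not_klinked {V : Type} [Fintype V] [DecidableEq V]
    (r : V → V → Prop) [DecidableRel r] (hT : IsTournament r)
    (k : ℕ) (hk : 2 ≤ k) (A B C : Finset V)
    (hAB : Disjoint A B) (hAC : Disjoint A C) (hBC : Disjoint B C)
    (hcover : A ∪ B ∪ C = Finset.univ)
    (hCcard : C.card = 2 * k - 2) (hAcard : 2 * k ≤ A.card) (hBcard : 2 * k ≤ B.card)
    (hABedges : ∀ a ∈ A, ∀ b ∈ B, r a b)
    (hBCedges : ∀ b ∈ B, ∀ c ∈ C, r b c)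
    (hCAedges : ∀ c ∈ C, ∀ a ∈ A, r c a) :
    ¬ KLinked r k := by
  intro hK
  have hcov : ∀ v : V, v ∈ A ∨ v ∈ B ∨ v ∈ C := by
    intro v
    have : v ∈ A ∪ B ∪ C := hcover ▸ Finset.mem_univ v
    simpa [Finset.mem_union, or_assoc] using this
  obtain ⟨a0, ha0⟩ : A.Nonempty := Finset.card_pos.mp (by omega)
  obtain ⟨b0, hb0⟩ : B.Nonempty := Finset.card_pos.mp (by omega)
  -- enumerate C
  let e : Fin (2 * k - 2) ≃ ↥C := (Finset.equivFinOfCardEq hCcard).symm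
  -- sources: first k-1 vertices of C, then b0; sinks: last k-1 vertices of C, then a0
  set x : Fin k → V := fun i =>
    if h : (i : ℕ) < k - 1 then (e ⟨i, by omega⟩ : V) else b0 with hxdef
  set y : Fin k → V := fun i =>
    if h : (i : ℕ) < k - 1 then (e ⟨(k - 1) + i, by omega⟩ : V) else a0 with hydef
  have heC : ∀ m : Fin (2 * k - 2), (e m : V) ∈ C := fun m => (e m).2
  have heinj : ∀ m m' : Fin (2 * k - 2), (e m : V) = (e m' : V) → m = m' := by
    intro m m' h
    exact e.injective (Subtype.coe_injective h)
  have hxinj : Function.Injective x := by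
    intro i j hij
    simp only [hxdef] at hij
    by_cases hi : (i : ℕ) < k - 1 <;> by_cases hj : (j : ℕ) < k - 1 <;>
      simp only [hi, hj, dif_pos, dif_neg, not_false_iff] at hij
    · have := heinj _ _ hij
      exact Fin.ext (by simpa using Fin.mk.inj_iff.mp this)
    · exact absurd hij.symm (by
        intro h; exact (Finset.disjoint_left.mp hBC hb0) (h ▸ heC _))
    · exact absurd hij (by
        intro h; exact (Finset.disjoint_left.mp hBC hb0) (h ▸ heC _))
    · have hi' : (i : ℕ) = k - 1 := by omega
      have hj' : (j : ℕ) = k - 1 := by omega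
      exact Fin.ext (hi'.trans hj'.symm)
  have hyinj : Function.Injective y := by
    intro i j hij
    simp only [hydef] at hij
    by_cases hi : (i : ℕ) < k - 1 <;> by_cases hj : (j : ℕ) < k - 1 <;>
      simp only [hi, hj, dif_pos, dif_neg, not_false_iff] at hij
    · have := heinj _ _ hij
      have := Fin.mk.inj_iff.mp this
      exact Fin.ext (by omega)
    · exact absurd hij.symm (by
        intro h; exact (Finset.disjoint_left.mp hAC ha0) (h ▸ heC _))
    · exact absurd hij (by
        intro h; exact (Finset.disjoint_left.mp hAC ha0) (h ▸ heC _))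
    · have hi' : (i : ℕ) = k - 1 := by omega
      have hj' : (j : ℕ) = k - 1 := by omega
      exact Fin.ext (hi'.trans hj'.symm)
  have hxy : ∀ i j, x i ≠ y j := by
    intro i j
    simp only [hxdef, hydef]
    by_cases hi : (i : ℕ) < k - 1 <;> by_cases hj : (j : ℕ) < k - 1 <;>
      simp only [hi, hj, dif_pos, dif_neg, not_false_iff]
    · intro h
      have := heinj _ _ h
      have := Fin.mk.inj_iff.mp this
      omega
    · intro h; exact (Finset.disjoint_left.mp hAC ha0) (h ▸ heC _)
    · intro h; exact (Finset.disjoint_left.mp hBC hb0) (h.symm ▸ heC _)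
    · intro h
      exact (Finset.disjoint_left.mp hAB ha0) (h ▸ hb0)
  obtain ⟨P, hP, hdisj⟩ := hK x y hxinj hyinj hxy
  -- the last path goes from b0 ∈ B to a0 ∈ A, so it hits C
  have hklt : k - 1 < k := by omega
  set i0 : Fin k := ⟨k - 1, hklt⟩ with hi0
  obtain ⟨hch, hnd, hhead, hlast⟩ := hP i0
  have hxi0 : x i0 = b0 := by simp [hxdef, hi0]
  have hyi0 : y i0 = a0 := by simp [hydef, hi0]
  rw [hxi0] at hhead
  rw [hyi0] at hlast
  obtain ⟨c, hcC, hcp⟩ := must_hit_C r hT A B C hAB hcov hABedges (P i0) hch b0 hhead hb0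
    a0 hlast ha0
  -- c is one of the endpoints of the other paths
  set m : Fin (2 * k - 2) := e.symm ⟨c, hcC⟩ with hm
  have hem : (e m : V) = c := by simp [hm]
  by_cases hmlt : (m : ℕ) < k - 1
  · -- c = x j for j = ⟨m, _⟩
    set j : Fin k := ⟨m, by omega⟩ with hj
    have hxj : x j = c := by
      rw [hxdef]
      simp only [hj, hmlt, dif_pos]
      exact hem
    have hji0 : j ≠ i0 := by
      intro h
      have : (m : ℕ) = k - 1 := congrArg Fin.val h
      omega
    obtain ⟨hch', hnd', hhead', hlast'⟩ := hP j
    have hcPj : c ∈ P j := hxj ▸ head_mem_of_head? hhead'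
    exact hdisj i0 j (Ne.symm hji0) c hcp hcPj
  · -- c = y j for j = ⟨m - (k-1), _⟩
    have hmub : (m : ℕ) < 2 * k - 2 := m.2
    set j : Fin k := ⟨(m : ℕ) - (k - 1), by omega⟩ with hj
    have hjlt : ((j : ℕ)) < k - 1 := by simp only [hj]; omega
    have hyj : y j = c := by
      rw [hydef]
      simp only [hj, hjlt, dif_pos]
      rw [dif_pos (show (m : ℕ) - (k - 1) < k - 1 by omega)]
      exact (congrArg (fun t => (e t : V)) (Fin.ext (show (k - 1) + ((m : ℕ) - (k - 1)) = (m : ℕ) by omega))).trans hem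
    have hji0 : j ≠ i0 := by
      intro h
      have : (m : ℕ) - (k - 1) = k - 1 := congrArg Fin.val h
      omega
    obtain ⟨hch', hnd', hhead', hlast'⟩ := hP j
    have hcPj : c ∈ P j := hyj ▸ last_mem_of_getLast? hlast'
    exact hdisj i0 j (Ne.symm hji0) c hcp hcPj
end
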